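/- arXiv:2101.10151 — 10 statements merged into one kernel-verified Lean document; each statement's English description precedes it below -/
import Mathlib

section
/- Suppose a feasible schedule (pᴰ,pᶜ,e) maximizes the profit Π over the set of feasible schedules, and there is an interval t* such that 0 < pᴰ_{t*} < ḡᴰ (the ESR is marginal in discharging at t*) and Eₗₒ < e_t < Eₕᵢ for every t with t* ≤ t ≤ T (the SOC does not reach its limits from t* to the end of the horizon). Then π_{t*} = a_{t*}: the uniform price at t* equals the ESR's marginal discharging cost. -/
open Finset

/-- The state of charge in the previous interval: `e₀` for the first interval,
`e (t-1)` otherwise. -/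
noncomputable def socPrev {T : ℕ} (e0 : ℝ) (e : Fin T → ℝ) (t : Fin T) : ℝ :=
  if _ : 0 < t.val then e ⟨t.val - 1, lt_of_le_of_lt (Nat.sub_le _ _) t.isLt⟩ else e0

/-- Feasibility of an ESR schedule `(pD, pC, e)`. -/
def Feasible {T : ℕ} (gDbar gCbar Elo Ehi e0 xiD xiC : ℝ)
    (pD pC e : Fin T → ℝ) : Prop :=
  ∀ t : Fin T,
    e t = socPrev e0 e t + xiC * pC t - pD t / xiD ∧
    Elo ≤ e t ∧ e t ≤ Ehi ∧
    0 ≤ pD t ∧ pD t ≤ gDbar ∧ 0 ≤ pC t ∧ pC t ≤ gCbar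

/-- Profit of a schedule under the uniform price `π`. -/
noncomputable def profit {T : ℕ} (π a b pD pC : Fin T → ℝ) : ℝ :=
  ∑ t, ((π t - a t) * pD t + (b t - π t) * pC t)

/-- if a profit-maximizing feasible schedule is marginal in discharging at
`t*` and the SOC stays strictly within its bounds from `t*` to the end of the horizon,
then the uniform price at `t*` equals the marginal discharging cost: `π_{t*} = a_{t*}`. -/
theorem price_eq_marginal_discharging_cost
    (T : ℕ) (hT : 1 ≤ T)
    (gDbar gCbar Elo Ehi e0 xiD xiC : ℝ)
    (hgD : 0 < gDbar) (hgC : 0 < gCbar) (hE : Elo ≤ Ehi)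
    (he0l : Elo ≤ e0) (he0u : e0 ≤ Ehi)
    (hxiD0 : 0 < xiD) (hxiD1 : xiD ≤ 1) (hxiC0 : 0 < xiC) (hxiC1 : xiC ≤ 1)
    (π a b : Fin T → ℝ)
    (pD pC e : Fin T → ℝ)
    (hfeas : Feasible gDbar gCbar Elo Ehi e0 xiD xiC pD pC e)
    (hmax : ∀ qD qC e' : Fin T → ℝ,
      Feasible gDbar gCbar Elo Ehi e0 xiD xiC qD qC e' →
      profit π a b qD qC ≤ profit π a b pD pC)
    (tstar : Fin T)
    (hmarg_lo : 0 < pD tstar) (hmarg_hi : pD tstar < gDbar)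
    (hsoc : ∀ t : Fin T, tstar ≤ t → Elo < e t ∧ e t < Ehi) :
    π tstar = a tstar := by
  classical
  by_contra hne
  set c := π tstar - a tstar with hc
  have hc0 : c ≠ 0 := sub_ne_zero.mpr hne
  set S := Finset.univ.filter (fun t : Fin T => tstar ≤ t) with hS
  have hSt : tstar ∈ S := by simp [hS]
  set m := S.inf' ⟨tstar, hSt⟩ (fun t => min (e t - Elo) (Ehi - e t)) with hm'
  have hm : 0 < m := by
    rw [hm']; refine (Finset.lt_inf'_iff _).2 ?_
    intro t ht
    have ht' : tstar ≤ t := by simpa [hS] using ht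
    obtain ⟨h1, h2⟩ := hsoc t ht'
    exact lt_min (by linarith) (by linarith)
  have hmle : ∀ t : Fin T, tstar ≤ t → m ≤ min (e t - Elo) (Ehi - e t) := by
    intro t ht
    exact Finset.inf'_le _ (by simp [hS, ht])
  set δ := min (min (gDbar - pD tstar) (pD tstar)) (xiD * m) with hδ'
  have hδ : 0 < δ :=
    lt_min (lt_min (by linarith) hmarg_lo) (mul_pos hxiD0 hm)
  set ε := if 0 < c then δ else -δ with hε'
  have hε1 : ε ≤ δ := by rw [hε']; split <;> linarith
  have hε2 : -δ ≤ ε := by rw [hε']; split <;> linarith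
  have hcε : 0 < c * ε := by
    rw [hε']
    rcases lt_trichotomy c 0 with h | h | h
    · simp only [if_neg (not_lt.mpr h.le)]
      nlinarith
    · exact absurd h hc0
    · simp only [if_pos h]
      exact mul_pos h hδ
  have hδ1 : δ ≤ gDbar - pD tstar := le_trans (min_le_left _ _) (min_le_left _ _)
  have hδ2 : δ ≤ pD tstar := le_trans (min_le_left _ _) (min_le_right _ _)
  have hδ3 : δ ≤ xiD * m := min_le_right _ _
  set qD := Function.update pD tstar (pD tstar + ε) with hqD
  set e' := fun t => if tstar ≤ t then e t - ε / xiD else e t with he'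
  have hεxi : ∀ t : Fin T, tstar ≤ t → Elo ≤ e t - ε / xiD ∧ e t - ε / xiD ≤ Ehi := by
    intro t ht
    have h := hmle t ht
    have h1 : m ≤ e t - Elo := le_trans h (min_le_left _ _)
    have h2 : m ≤ Ehi - e t := le_trans h (min_le_right _ _)
    have hd1 : ε / xiD ≤ m := by
      rw [div_le_iff₀ hxiD0]; nlinarith
    have hd2 : -m ≤ ε / xiD := by
      rw [le_div_iff₀ hxiD0]; nlinarith
    constructor <;> linarith
  have hfeas' : Feasible gDbar gCbar Elo Ehi e0 xiD xiC qD pC e' := by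
    intro t
    obtain ⟨heq, hl, hu, hdl, hdu, hcl, hcu⟩ := hfeas t
    rcases lt_trichotomy t tstar with hlt | heqt | hgt
    · -- t < tstar : nothing changes
      have hnt : ¬ tstar ≤ t := not_le.mpr hlt
      have hqt : qD t = pD t := Function.update_of_ne (ne_of_lt hlt) _ _
      have het : e' t = e t := by simp [he', hnt]
      have hsp : socPrev e0 e' t = socPrev e0 e t := by
        unfold socPrev
        split
        · next hpos =>
            have : ¬ tstar ≤ (⟨t.val - 1, lt_of_le_of_lt (Nat.sub_le _ _) t.isLt⟩ : Fin T) := by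
              rw [Fin.not_le]
              have : t.val - 1 < tstar.val :=
                lt_of_le_of_lt (Nat.sub_le _ _) hlt
              exact this
            simp [he', this]
        · rfl
      refine ⟨?_, ?_, ?_, ?_, ?_, hcl, hcu⟩
      · rw [hqt, het, hsp]; exact heq
      · rw [het]; exact hl
      · rw [het]; exact hu
      · rw [hqt]; exact hdl
      · rw [hqt]; exact hdu
    · -- t = tstar
      subst heqt
      have hqt : qD t = pD t + ε := Function.update_self _ _ _
      have het : e' t = e t - ε / xiD := by simp [he']
      have hsp : socPrev e0 e' t = socPrev e0 e t := by
        unfold socPrev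
        split
        · next hpos =>
            have : ¬ t ≤ (⟨t.val - 1, lt_of_le_of_lt (Nat.sub_le _ _) t.isLt⟩ : Fin T) := by
              rw [Fin.not_le]
              exact Nat.sub_lt hpos one_pos
            simp [he', this]
        · rfl
      have hbnd := hεxi t le_rfl
      refine ⟨?_, ?_, ?_, ?_, ?_, hcl, hcu⟩
      · rw [hqt, het, hsp, add_div]
        rw [heq]; ring
      · rw [het]; exact hbnd.1
      · rw [het]; exact hbnd.2
      · rw [hqt]; linarith
      · rw [hqt]; linarith
    · -- tstar < t
      have hlt' : tstar ≤ t := le_of_lt hgt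
      have hqt : qD t = pD t := Function.update_of_ne (ne_of_gt hgt) _ _
      have het : e' t = e t - ε / xiD := by simp [he', hlt']
      have hpos : 0 < t.val := lt_of_le_of_lt (Nat.zero_le _) hgt
      have hsp : socPrev e0 e' t = socPrev e0 e t - ε / xiD := by
        unfold socPrev
        split
        · next hpos' =>
            have : tstar ≤ (⟨t.val - 1, lt_of_le_of_lt (Nat.sub_le _ _) t.isLt⟩ : Fin T) := by
              rw [Fin.le_def]
              exact Nat.le_sub_one_of_lt hgt
            simp [he', this]
        · next hpos' => exact absurd hpos hpos'
      have hbnd := hεxi t hlt'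
      refine ⟨?_, ?_, ?_, ?_, ?_, hcl, hcu⟩
      · rw [hqt, het, hsp]; linarith
      · rw [het]; exact hbnd.1
      · rw [het]; exact hbnd.2
      · rw [hqt]; exact hdl
      · rw [hqt]; exact hdu
  have hprof : profit π a b qD pC - profit π a b pD pC = c * ε := by
    unfold profit
    rw [← Finset.sum_sub_distrib, Finset.sum_eq_single tstar]
    · rw [hqD, Function.update_self, hc]; ring
    · intro t _ htne
      rw [hqD, Function.update_of_ne htne]; ring
    · intro h; exact absurd (Finset.mem_univ tstar) h
  have := hmax qD pC e' hfeas'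
  linarith
end

section
/- Suppose a feasible schedule (pᴰ,pᶜ,e) maximizes the profit Π over the set of feasible schedules, and there is an interval t* such that 0 < pᶜ_{t*} < ḡᶜ (the ESR is marginal in charging at t*) and Eₗₒ < e_t < Eₕᵢ for every t with t* ≤ t ≤ T (the SOC does not reach its limits from t* to the end of the horizon). Then π_{t*} = b_{t*}: the uniform price at t* equals the ESR's marginal charging benefit. -/
open Finset

/-- if a profit-maximizing feasible schedule is marginal in charging at
`t*` and the SOC stays strictly within its bounds from `t*` to the end of the horizon,
then the uniform price at `t*` equals the marginal charging benefit: `π_{t*} = b_{t*}`. -/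
theorem price_eq_marginal_charging_benefit
    (T : ℕ) (hT : 1 ≤ T)
    (gDbar gCbar Elo Ehi e0 xiD xiC : ℝ)
    (hgD : 0 < gDbar) (hgC : 0 < gCbar) (hE : Elo ≤ Ehi)
    (he0l : Elo ≤ e0) (he0u : e0 ≤ Ehi)
    (hxiD0 : 0 < xiD) (hxiD1 : xiD ≤ 1) (hxiC0 : 0 < xiC) (hxiC1 : xiC ≤ 1)
    (π a b : Fin T → ℝ)
    (pD pC e : Fin T → ℝ)
    (hfeas : Feasible gDbar gCbar Elo Ehi e0 xiD xiC pD pC e)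
    (hmax : ∀ qD qC e' : Fin T → ℝ,
      Feasible gDbar gCbar Elo Ehi e0 xiD xiC qD qC e' →
      profit π a b qD qC ≤ profit π a b pD pC)
    (tstar : Fin T)
    (hmarg_lo : 0 < pC tstar) (hmarg_hi : pC tstar < gCbar)
    (hsoc : ∀ t : Fin T, tstar ≤ t → Elo < e t ∧ e t < Ehi) :
    π tstar = b tstar := by
  classical
  have key : ∀ ε : ℝ, 0 ≤ pC tstar + ε → pC tstar + ε ≤ gCbar →
      (∀ t : Fin T, tstar ≤ t → Elo ≤ e t + xiC * ε ∧ e t + xiC * ε ≤ Ehi) →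
      (b tstar - π tstar) * ε ≤ 0 := by
    intro ε hε1 hε2 hε3
    set qC : Fin T → ℝ := fun t => if t = tstar then pC t + ε else pC t with hqC
    set e' : Fin T → ℝ := fun t => if tstar ≤ t then e t + xiC * ε else e t with he'
    have hfeas' : Feasible gDbar gCbar Elo Ehi e0 xiD xiC pD qC e' := by
      intro t
      obtain ⟨hrec, hl, hu, hd0, hd1, hc0, hc1⟩ := hfeas t
      refine ⟨?_, ?_, ?_, hd0, hd1, ?_, ?_⟩
      · -- recursion
        by_cases h0 : 0 < t.val
        · set t1 : Fin T := ⟨t.val - 1, lt_of_le_of_lt (Nat.sub_le _ _) t.isLt⟩ with ht1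
          have hprev : socPrev e0 e t = e t1 := by simp [socPrev, h0, ht1]
          have hprev' : socPrev e0 e' t = e' t1 := by simp [socPrev, h0, ht1]
          rw [hprev] at hrec
          rw [hprev']
          have ht1v : t1.val = t.val - 1 := rfl
          by_cases hts : tstar ≤ t
          · by_cases heq : t = tstar
            · have h1 : ¬ tstar ≤ t1 := by
                rw [Fin.not_le, Fin.lt_def, ht1v]
                have : tstar.val = t.val := by rw [heq]
                omega
              simp only [he', hqC, if_pos hts, if_neg h1, if_pos heq]
              linarith [hrec]
            · have hlt : tstar.val < t.val := by
                have h1 := Fin.le_def.mp hts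
                have h2 : tstar.val ≠ t.val := fun h => heq (Fin.ext h.symm)
                omega
              have h2 : tstar ≤ t1 := by rw [Fin.le_def, ht1v]; omega
              simp only [he', hqC, if_pos hts, if_pos h2, if_neg heq]
              linarith [hrec]
          · have heq : ¬ t = tstar := fun h => hts (le_of_eq h.symm)
            have h3 : ¬ tstar ≤ t1 := by
              rw [Fin.not_le, Fin.lt_def, ht1v]
              have := Fin.not_le.mp hts
              have := Fin.lt_def.mp this
              omega
            simp only [he', hqC, if_neg hts, if_neg h3, if_neg heq]
            linarith [hrec]
        · have ht0 : t.val = 0 := by omega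
          have hprev : socPrev e0 e t = e0 := by simp [socPrev, h0]
          have hprev' : socPrev e0 e' t = e0 := by simp [socPrev, h0]
          rw [hprev] at hrec
          rw [hprev']
          by_cases hts : tstar ≤ t
          · have heq : t = tstar := by
              have h1 := Fin.le_def.mp hts
              exact Fin.ext (by omega)
            simp only [he', hqC, if_pos hts, if_pos heq]
            linarith [hrec]
          · have heq : ¬ t = tstar := fun h => hts (le_of_eq h.symm)
            simp only [he', hqC, if_neg hts, if_neg heq]
            linarith [hrec]
      · by_cases hts : tstar ≤ t
        · simp only [he', if_pos hts]; exact (hε3 t hts).1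
        · simpa [he', hts] using hl
      · by_cases hts : tstar ≤ t
        · simp only [he', if_pos hts]; exact (hε3 t hts).2
        · simpa [he', hts] using hu
      · by_cases heq : t = tstar
        · subst heq; simpa [hqC] using hε1
        · simpa [hqC, heq] using hc0
      · by_cases heq : t = tstar
        · subst heq; simpa [hqC] using hε2
        · simpa [hqC, heq] using hc1
    have hle := hmax pD qC e' hfeas'
    have hdiff : profit π a b pD qC
        = profit π a b pD pC + (b tstar - π tstar) * ε := by
      unfold profit
      have hterm : ∀ t : Fin T, (π t - a t) * pD t + (b t - π t) * qC t
          = ((π t - a t) * pD t + (b t - π t) * pC t)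
            + (if t = tstar then (b t - π t) * ε else 0) := by
        intro t
        by_cases h : t = tstar <;> simp [hqC, h] <;> ring
      rw [Finset.sum_congr rfl (fun t _ => hterm t), Finset.sum_add_distrib,
        Finset.sum_ite_eq' Finset.univ tstar]
      simp
    linarith
  -- choose a uniformly small perturbation size δ
  have hne : (Finset.univ : Finset (Fin T)).Nonempty := ⟨tstar, Finset.mem_univ _⟩
  set m : ℝ := Finset.univ.inf' hne
    (fun t => if tstar ≤ t then min (e t - Elo) (Ehi - e t) else 1) with hm
  have hmpos : 0 < m := by
    rw [hm, Finset.lt_inf'_iff]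
    intro t _
    by_cases hts : tstar ≤ t
    · obtain ⟨h1, h2⟩ := hsoc t hts
      simp only [if_pos hts, lt_min_iff]
      constructor <;> linarith
    · simp [hts]
  have hmle : ∀ t : Fin T, tstar ≤ t → m ≤ e t - Elo ∧ m ≤ Ehi - e t := by
    intro t hts
    have h := Finset.inf'_le 
      (f := fun t => if tstar ≤ t then min (e t - Elo) (Ehi - e t) else 1)
      (Finset.mem_univ t)
    rw [if_pos hts, le_min_iff] at h
    exact ⟨h.1, h.2⟩
  set δ : ℝ := min (min (pC tstar) (gCbar - pC tstar)) (m / xiC) with hδ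
  have hδpos : 0 < δ :=
    lt_min (lt_min hmarg_lo (by linarith)) (div_pos hmpos hxiC0)
  have hδ1 : δ ≤ pC tstar := le_trans (min_le_left _ _) (min_le_left _ _)
  have hδ2 : δ ≤ gCbar - pC tstar := le_trans (min_le_left _ _) (min_le_right _ _)
  have hxd : xiC * δ ≤ m := by
    have h := min_le_right (min (pC tstar) (gCbar - pC tstar)) (m / xiC)
    rw [le_div_iff₀ hxiC0] at h
    linarith
  have hxd0 : 0 ≤ xiC * δ := le_of_lt (mul_pos hxiC0 hδpos)
  have h1 : (b tstar - π tstar) * δ ≤ 0 := by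
    apply key δ (by linarith) (by linarith)
    intro t hts
    obtain ⟨ha, hb⟩ := hmle t hts
    obtain ⟨hl, hu⟩ := hsoc t hts
    constructor <;> linarith
  have h2 : (b tstar - π tstar) * (-δ) ≤ 0 := by
    apply key (-δ) (by linarith) (by linarith)
    intro t hts
    obtain ⟨ha, hb⟩ := hmle t hts
    obtain ⟨hl, hu⟩ := hsoc t hts
    constructor <;> nlinarith
  nlinarith
end

section
/- (Theorem 1: uniform pricing cannot give all ESRs zero lost opportunity cost.) Let ESR i and ESR j be two ESRs, each with its own capacities, SOC bounds, initial SOC and efficiencies, with linear bid-in marginal costs (aⁱ,bⁱ) and (aʲ,bʲ) respectively, and let (gᴰ,ⁱ,gᶜ,ⁱ,eⁱ) and (gᴰ,ʲ,gᶜ,ʲ,eʲ) be feasible schedules (their dispatches). Suppose there is an interval t* such that: (1) the bid-in marginal costs are distinct across the two ESRs at t*, i.e. each of aⁱ_{t*} and bⁱ_{t*} differs from each of aʲ_{t*} and bʲ_{t*}; (2) both ESRs are marginal at t*, i.e. 0 < gᴰ,ⁱ_{t*} < ḡᴰ,ⁱ or 0 < gᶜ,ⁱ_{t*} < ḡᶜ,ⁱ,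 and 0 < gᴰ,ʲ_{t*} < ḡᴰ,ʲ or 0 < gᶜ,ʲ_{t*} < ḡᶜ,ʲ; and (3) neither ESR's SOC reaches its limits from t* to the end of the horizon: Eₗₒᵏ < eᵏ_t < Eₕᵢᵏ for all t* ≤ t ≤ T and k ∈ {i,j}. Then there exists no uniform price vector π ∈ ℝᵀ such that simultaneously (gᴰ,ⁱ,gᶜ,ⁱ,eⁱ) maximizes ESR i's profit Πⁱ over ESR i's feasible set and (gᴰ,ʲ,gᶜ,ʲ,eʲ) maximizes ESR j's profit Πʲ over ESR j's feasible set. -/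
open Finset

lemma price_eq_of_discharge_marginal {T : ℕ}
    (gDbar gCbar Elo Ehi e0 xiD xiC : ℝ) (hxiD : 0 < xiD)
    (π a b pD pC e : Fin T → ℝ)
    (hfeas : Feasible gDbar gCbar Elo Ehi e0 xiD xiC pD pC e)
    (hopt : ∀ pD' pC' e' : Fin T → ℝ,
      Feasible gDbar gCbar Elo Ehi e0 xiD xiC pD' pC' e' →
      profit π a b pD' pC' ≤ profit π a b pD pC)
    (tstar : Fin T) (h1 : 0 < pD tstar) (h2 : pD tstar < gDbar)
    (hsoc : ∀ t : Fin T, tstar ≤ t → Elo < e t ∧ e t < Ehi) :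
    π tstar = a tstar := by
  have hne : tstar ∈ Finset.univ.filter (fun t : Fin T => tstar ≤ t) := by simp
  set m : ℝ := (Finset.univ.filter (fun t : Fin T => tstar ≤ t)).inf' ⟨tstar, hne⟩
    (fun t => min (e t - Elo) (Ehi - e t)) with hmdef
  have hm : 0 < m := by
    rw [hmdef]; refine (Finset.lt_inf'_iff _).2 ?_
    intro t ht
    simp only [Finset.mem_filter] at ht
    have := hsoc t ht.2
    exact lt_min (by linarith [this.1]) (by linarith [this.2])
  have hmle : ∀ t : Fin T, tstar ≤ t → m ≤ min (e t - Elo) (Ehi - e t) := by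
    intro t ht
    exact Finset.inf'_le _ (by simp [ht])
  set ε : ℝ := min (min (pD tstar) (gDbar - pD tstar)) (xiD * m) with hεdef
  have hε : 0 < ε := lt_min (lt_min h1 (by linarith)) (mul_pos hxiD hm)
  have hεm : ε ≤ m * xiD := le_trans (min_le_right _ _) (le_of_eq (mul_comm _ _))
  have hε1 : ε ≤ pD tstar := le_trans (min_le_left _ _) (min_le_left _ _)
  have hε2 : ε ≤ gDbar - pD tstar := le_trans (min_le_left _ _) (min_le_right _ _)
  have key : ∀ δ : ℝ, |δ| ≤ ε → (π tstar - a tstar) * δ ≤ 0 := by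
    intro δ hδ
    obtain ⟨hδ1, hδ2⟩ := abs_le.mp hδ
    have hdq1 : δ / xiD ≤ m := by rw [div_le_iff₀ hxiD]; linarith
    have hdq2 : -m ≤ δ / xiD := by rw [le_div_iff₀ hxiD]; nlinarith
    set pD' : Fin T → ℝ := Function.update pD tstar (pD tstar + δ) with hpD'
    set e' : Fin T → ℝ := fun t => if tstar ≤ t then e t - δ / xiD else e t with he'
    have hsp : ∀ t : Fin T,
        socPrev e0 e' t = socPrev e0 e t - (if tstar < t then δ / xiD else 0) := by
      intro t
      unfold socPrev
      by_cases h0 : 0 < t.val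
      · simp only [dif_pos h0]
        by_cases hlt : tstar < t
        · have hle : tstar ≤ (⟨t.val - 1, lt_of_le_of_lt (Nat.sub_le _ _) t.isLt⟩ : Fin T) := by
            rw [Fin.le_def]
            show tstar.val ≤ t.val - 1
            exact Nat.le_sub_one_of_lt (Fin.lt_def.mp hlt)
          simp [he', hle, hlt]
        · have hnle : ¬ tstar ≤ (⟨t.val - 1, lt_of_le_of_lt (Nat.sub_le _ _) t.isLt⟩ : Fin T) := by
            rw [Fin.le_def]
            show ¬ tstar.val ≤ t.val - 1
            have h' : t.val ≤ tstar.val := Nat.not_lt.mp (fun h => hlt (Fin.lt_def.mpr h))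
            omega
          simp [he', hnle, hlt]
      · have hnlt : ¬ tstar < t := by
          rw [Fin.lt_def]; omega
        simp [dif_neg h0, hnlt]
    have hfeas' : Feasible gDbar gCbar Elo Ehi e0 xiD xiC pD' pC e' := by
      intro t
      obtain ⟨hd, hl, hu, hpd0, hpdu, hpc0, hpcu⟩ := hfeas t
      refine ⟨?_, ?_, ?_, ?_, ?_, hpc0, hpcu⟩
      · rw [hsp t]
        rcases lt_trichotomy tstar t with h | h | h
        · have hle : tstar ≤ t := le_of_lt h
          have hne' : t ≠ tstar := ne_of_gt h
          simp only [he', hpD', if_pos hle, if_pos h, Function.update_of_ne hne']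
          rw [hd]; ring
        · subst h
          simp only [he', hpD', if_pos le_rfl, if_neg (lt_irrefl _), Function.update_self]
          rw [hd, add_div]; ring
        · have hnle : ¬ tstar ≤ t := not_le_of_gt h
          have hne' : t ≠ tstar := ne_of_lt h
          simp only [he', hpD', if_neg hnle, if_neg (not_lt_of_gt h), Function.update_of_ne hne']
          rw [hd]; ring
      · by_cases ht : tstar ≤ t
        · have := hmle t ht
          have h1' := le_trans this (min_le_left _ _)
          simp only [he', if_pos ht]
          linarith
        · simp only [he', if_neg ht]; exact hl
      · by_cases ht : tstar ≤ t
        · have := hmle t ht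
          have h2' := le_trans this (min_le_right _ _)
          simp only [he', if_pos ht]
          linarith
        · simp only [he', if_neg ht]; exact hu
      · by_cases ht : t = tstar
        · subst ht; simp only [hpD', Function.update_self]; linarith
        · simp only [hpD', Function.update_of_ne ht]; exact hpd0
      · by_cases ht : t = tstar
        · subst ht; simp only [hpD', Function.update_self]; linarith
        · simp only [hpD', Function.update_of_ne ht]; exact hpdu
    have hle := hopt pD' pC e' hfeas'
    have hpr : profit π a b pD' pC = profit π a b pD pC + (π tstar - a tstar) * δ := by
      unfold profit
      have : ∀ t : Fin T, (π t - a t) * pD' t + (b t - π t) * pC t =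
          ((π t - a t) * pD t + (b t - π t) * pC t) +
          (if t = tstar then (π tstar - a tstar) * δ else 0) := by
        intro t
        by_cases h : t = tstar
        · subst h; simp only [hpD', Function.update_self, if_pos rfl, eq_self_iff_true, if_true]; ring
        · simp only [hpD', Function.update_of_ne h, if_neg h]; ring
      rw [Finset.sum_congr rfl (fun t _ => this t), Finset.sum_add_distrib,
        Finset.sum_ite_eq' Finset.univ tstar, if_pos (Finset.mem_univ _)]
    linarith
  have k1 := key ε (by rw [abs_of_pos hε])
  have k2 := key (-ε) (by rw [abs_neg, abs_of_pos hε])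
  rw [mul_neg] at k2
  have hc : (π tstar - a tstar) * ε = 0 := le_antisymm k1 (by linarith)
  have := (mul_eq_zero.mp hc).resolve_right (ne_of_gt hε)
  linarith

lemma price_eq_of_charge_marginal {T : ℕ}
    (gDbar gCbar Elo Ehi e0 xiD xiC : ℝ) (hxiC : 0 < xiC)
    (π a b pD pC e : Fin T → ℝ)
    (hfeas : Feasible gDbar gCbar Elo Ehi e0 xiD xiC pD pC e)
    (hopt : ∀ pD' pC' e' : Fin T → ℝ,
      Feasible gDbar gCbar Elo Ehi e0 xiD xiC pD' pC' e' →
      profit π a b pD' pC' ≤ profit π a b pD pC)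
    (tstar : Fin T) (h1 : 0 < pC tstar) (h2 : pC tstar < gCbar)
    (hsoc : ∀ t : Fin T, tstar ≤ t → Elo < e t ∧ e t < Ehi) :
    π tstar = b tstar := by
  have hne : tstar ∈ Finset.univ.filter (fun t : Fin T => tstar ≤ t) := by simp
  set m : ℝ := (Finset.univ.filter (fun t : Fin T => tstar ≤ t)).inf' ⟨tstar, hne⟩
    (fun t => min (e t - Elo) (Ehi - e t)) with hmdef
  have hm : 0 < m := by
    rw [hmdef]; refine (Finset.lt_inf'_iff _).2 ?_
    intro t ht
    simp only [Finset.mem_filter] at ht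
    have := hsoc t ht.2
    exact lt_min (by linarith [this.1]) (by linarith [this.2])
  have hmle : ∀ t : Fin T, tstar ≤ t → m ≤ min (e t - Elo) (Ehi - e t) := by
    intro t ht
    exact Finset.inf'_le _ (by simp [ht])
  set ε : ℝ := min (min (pC tstar) (gCbar - pC tstar)) (m / xiC) with hεdef
  have hε : 0 < ε := lt_min (lt_min h1 (by linarith)) (div_pos hm hxiC)
  have hεm : ε * xiC ≤ m := (le_div_iff₀ hxiC).mp (min_le_right _ _)
  have hε1 : ε ≤ pC tstar := le_trans (min_le_left _ _) (min_le_left _ _)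
  have hε2 : ε ≤ gCbar - pC tstar := le_trans (min_le_left _ _) (min_le_right _ _)
  have key : ∀ δ : ℝ, |δ| ≤ ε → (b tstar - π tstar) * δ ≤ 0 := by
    intro δ hδ
    obtain ⟨hδ1, hδ2⟩ := abs_le.mp hδ
    have hdq1 : xiC * δ ≤ m := by nlinarith
    have hdq2 : -m ≤ xiC * δ := by nlinarith
    set pC' : Fin T → ℝ := Function.update pC tstar (pC tstar + δ) with hpC'
    set e' : Fin T → ℝ := fun t => if tstar ≤ t then e t + xiC * δ else e t with he'
    have hsp : ∀ t : Fin T,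
        socPrev e0 e' t = socPrev e0 e t + (if tstar < t then xiC * δ else 0) := by
      intro t
      unfold socPrev
      by_cases h0 : 0 < t.val
      · simp only [dif_pos h0]
        by_cases hlt : tstar < t
        · have hle : tstar ≤ (⟨t.val - 1, lt_of_le_of_lt (Nat.sub_le _ _) t.isLt⟩ : Fin T) := by
            rw [Fin.le_def]
            show tstar.val ≤ t.val - 1
            exact Nat.le_sub_one_of_lt (Fin.lt_def.mp hlt)
          simp [he', hle, hlt]
        · have hnle : ¬ tstar ≤ (⟨t.val - 1, lt_of_le_of_lt (Nat.sub_le _ _) t.isLt⟩ : Fin T) := by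
            rw [Fin.le_def]
            show ¬ tstar.val ≤ t.val - 1
            have h' : t.val ≤ tstar.val := Nat.not_lt.mp (fun h => hlt (Fin.lt_def.mpr h))
            omega
          simp [he', hnle, hlt]
      · have hnlt : ¬ tstar < t := by
          rw [Fin.lt_def]; omega
        simp [dif_neg h0, hnlt]
    have hfeas' : Feasible gDbar gCbar Elo Ehi e0 xiD xiC pD pC' e' := by
      intro t
      obtain ⟨hd, hl, hu, hpd0, hpdu, hpc0, hpcu⟩ := hfeas t
      refine ⟨?_, ?_, ?_, hpd0, hpdu, ?_, ?_⟩
      · rw [hsp t]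
        rcases lt_trichotomy tstar t with h | h | h
        · have hle : tstar ≤ t := le_of_lt h
          have hne' : t ≠ tstar := ne_of_gt h
          simp only [he', hpC', if_pos hle, if_pos h, Function.update_of_ne hne']
          rw [hd]; ring
        · subst h
          simp only [he', hpC', if_pos le_rfl, if_neg (lt_irrefl _), Function.update_self]
          rw [hd]; ring
        · have hnle : ¬ tstar ≤ t := not_le_of_gt h
          have hne' : t ≠ tstar := ne_of_lt h
          simp only [he', hpC', if_neg hnle, if_neg (not_lt_of_gt h), Function.update_of_ne hne']
          rw [hd]; ring
      · by_cases ht : tstar ≤ t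
        · have := hmle t ht
          have h1' := le_trans this (min_le_left _ _)
          simp only [he', if_pos ht]
          linarith
        · simp only [he', if_neg ht]; exact hl
      · by_cases ht : tstar ≤ t
        · have := hmle t ht
          have h2' := le_trans this (min_le_right _ _)
          simp only [he', if_pos ht]
          linarith
        · simp only [he', if_neg ht]; exact hu
      · by_cases ht : t = tstar
        · subst ht; simp only [hpC', Function.update_self]; linarith
        · simp only [hpC', Function.update_of_ne ht]; exact hpc0
      · by_cases ht : t = tstar
        · subst ht; simp only [hpC', Function.update_self]; linarith
        · simp only [hpC', Function.update_of_ne ht]; exact hpcu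
    have hle := hopt pD pC' e' hfeas'
    have hpr : profit π a b pD pC' = profit π a b pD pC + (b tstar - π tstar) * δ := by
      unfold profit
      have : ∀ t : Fin T, (π t - a t) * pD t + (b t - π t) * pC' t =
          ((π t - a t) * pD t + (b t - π t) * pC t) +
          (if t = tstar then (b tstar - π tstar) * δ else 0) := by
        intro t
        by_cases h : t = tstar
        · subst h; simp only [hpC', Function.update_self, if_pos rfl, eq_self_iff_true, if_true]; ring
        · simp only [hpC', Function.update_of_ne h, if_neg h]; ring
      rw [Finset.sum_congr rfl (fun t _ => this t), Finset.sum_add_distrib,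
        Finset.sum_ite_eq' Finset.univ tstar, if_pos (Finset.mem_univ _)]
    linarith
  have k1 := key ε (by rw [abs_of_pos hε])
  have k2 := key (-ε) (by rw [abs_neg, abs_of_pos hε])
  rw [mul_neg] at k2
  have hc : (b tstar - π tstar) * ε = 0 := le_antisymm k1 (by linarith)
  have := (mul_eq_zero.mp hc).resolve_right (ne_of_gt hε)
  linarith

/-- Theorem 1: under the conditions that two ESRs have distinct bid-in
marginal costs at `t*`, are both marginal at `t*`, and neither reaches its SOC limits
from `t*` to the end of the horizon, no uniform price vector makes both dispatches
simultaneously profit-maximizing for the respective ESRs. -/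
theorem no_uniform_price_supports_both_ESRs
    (T : ℕ) (hT : 1 ≤ T)
    -- ESR i parameters
    (gDbari gCbari Eloi Ehii e0i xiDi xiCi : ℝ)
    (hgDi : 0 < gDbari) (hgCi : 0 < gCbari) (hEi : Eloi ≤ Ehii)
    (he0il : Eloi ≤ e0i) (he0iu : e0i ≤ Ehii)
    (hxiDi0 : 0 < xiDi) (hxiDi1 : xiDi ≤ 1) (hxiCi0 : 0 < xiCi) (hxiCi1 : xiCi ≤ 1)
    -- ESR j parameters
    (gDbarj gCbarj Eloj Ehij e0j xiDj xiCj : ℝ)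
    (hgDj : 0 < gDbarj) (hgCj : 0 < gCbarj) (hEj : Eloj ≤ Ehij)
    (he0jl : Eloj ≤ e0j) (he0ju : e0j ≤ Ehij)
    (hxiDj0 : 0 < xiDj) (hxiDj1 : xiDj ≤ 1) (hxiCj0 : 0 < xiCj) (hxiCj1 : xiCj ≤ 1)
    -- bid-in marginal costs
    (ai bi aj bj : Fin T → ℝ)
    -- dispatches (feasible schedules)
    (gDi gCi ei gDj gCj ej : Fin T → ℝ)
    (hfeasi : Feasible gDbari gCbari Eloi Ehii e0i xiDi xiCi gDi gCi ei)
    (hfeasj : Feasible gDbarj gCbarj Eloj Ehij e0j xiDj xiCj gDj gCj ej)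
    (tstar : Fin T)
    -- (1) distinct bid-in marginal costs at t*
    (hdist1 : ai tstar ≠ aj tstar) (hdist2 : ai tstar ≠ bj tstar)
    (hdist3 : bi tstar ≠ aj tstar) (hdist4 : bi tstar ≠ bj tstar)
    -- (2) both ESRs are marginal at t*
    (hmargi : (0 < gDi tstar ∧ gDi tstar < gDbari) ∨ (0 < gCi tstar ∧ gCi tstar < gCbari))
    (hmargj : (0 < gDj tstar ∧ gDj tstar < gDbarj) ∨ (0 < gCj tstar ∧ gCj tstar < gCbarj))
    -- (3) SOC strictly inside its bounds from t* to the end of the horizon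
    (hsoci : ∀ t : Fin T, tstar ≤ t → Eloi < ei t ∧ ei t < Ehii)
    (hsocj : ∀ t : Fin T, tstar ≤ t → Eloj < ej t ∧ ej t < Ehij) :
    ¬ ∃ π : Fin T → ℝ,
      (∀ pD pC e' : Fin T → ℝ,
        Feasible gDbari gCbari Eloi Ehii e0i xiDi xiCi pD pC e' →
        profit π ai bi pD pC ≤ profit π ai bi gDi gCi) ∧
      (∀ pD pC e' : Fin T → ℝ,
        Feasible gDbarj gCbarj Eloj Ehij e0j xiDj xiCj pD pC e' →
        profit π aj bj pD pC ≤ profit π aj bj gDj gCj) := by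
  rintro ⟨π, hopti, hoptj⟩
  have hi : π tstar = ai tstar ∨ π tstar = bi tstar := by
    rcases hmargi with ⟨h1, h2⟩ | ⟨h1, h2⟩
    · exact Or.inl (price_eq_of_discharge_marginal _ _ _ _ _ _ _ hxiDi0 _ _ _ _ _ _
        hfeasi hopti tstar h1 h2 hsoci)
    · exact Or.inr (price_eq_of_charge_marginal _ _ _ _ _ _ _ hxiCi0 _ _ _ _ _ _
        hfeasi hopti tstar h1 h2 hsoci)
  have hj : π tstar = aj tstar ∨ π tstar = bj tstar := by
    rcases hmargj with ⟨h1, h2⟩ | ⟨h1, h2⟩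
    · exact Or.inl (price_eq_of_discharge_marginal _ _ _ _ _ _ _ hxiDj0 _ _ _ _ _ _
        hfeasj hoptj tstar h1 h2 hsocj)
    · exact Or.inr (price_eq_of_charge_marginal _ _ _ _ _ _ _ hxiCj0 _ _ _ _ _ _
        hfeasj hoptj tstar h1 h2 hsocj)
  rcases hi with hi | hi <;> rcases hj with hj | hj
  · exact hdist1 (hi ▸ hj ▸ rfl : ai tstar = aj tstar)
  · exact hdist2 (hi ▸ hj ▸ rfl)
  · exact hdist3 (hi ▸ hj ▸ rfl)
  · exact hdist4 (hi ▸ hj ▸ rfl)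
end

section
/- (Theorem 1, lost-opportunity-cost form.) Under the hypotheses of Theorem 1 — two ESRs i and j with feasible dispatches, an interval t* at which their bid-in marginal costs are pairwise distinct across ESRs, both ESRs marginal at t*, and both ESRs' SOC strictly inside its bounds from t* to T — for every uniform price vector π ∈ ℝᵀ, LOCⁱ(π) + LOCʲ(π) > 0, where LOCᵏ(π) = Qᵏ(π) − Πᵏ(gᴰ,ᵏ,gᶜ,ᵏ) and Qᵏ(π) is the maximum of ESR k's profit over its feasible set. That is, under every uniform price at least one of the two ESRs has strictly positive lost opportunity cost. -/
open Finset

/-- The set of feasible ESR schedules as a subset of ℝᵀ × ℝᵀ × ℝᵀ. -/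
def FeasSet (T : ℕ) (gDbar gCbar Elo Ehi e0 xiD xiC : ℝ) :
    Set ((Fin T → ℝ) × (Fin T → ℝ) × (Fin T → ℝ)) :=
  {x | Feasible gDbar gCbar Elo Ehi e0 xiD xiC x.1 x.2.1 x.2.2}

lemma perturb_feasible {T : ℕ} (gDbar gCbar Elo Ehi e0 xiD xiC : ℝ)
    (pD pC e : Fin T → ℝ)
    (hfeas : Feasible gDbar gCbar Elo Ehi e0 xiD xiC pD pC e)
    (tstar : Fin T) (εD εC : ℝ)
    (hD1 : 0 ≤ pD tstar + εD) (hD2 : pD tstar + εD ≤ gDbar)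
    (hC1 : 0 ≤ pC tstar + εC) (hC2 : pC tstar + εC ≤ gCbar)
    (hE : ∀ t, tstar ≤ t → Elo ≤ e t + (xiC * εC - εD / xiD) ∧
      e t + (xiC * εC - εD / xiD) ≤ Ehi) :
    Feasible gDbar gCbar Elo Ehi e0 xiD xiC
      (fun t => if t = tstar then pD t + εD else pD t)
      (fun t => if t = tstar then pC t + εC else pC t)
      (fun t => if tstar ≤ t then e t + (xiC * εC - εD / xiD) else e t) := by
  intro t
  obtain ⟨heq, hel, heu, hd0, hd1, hc0, hc1⟩ := hfeas t
  set s := xiC * εC - εD / xiD with hs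
  refine ⟨?_, ?_, ?_, ?_, ?_, ?_, ?_⟩
  · -- SOC equation
    by_cases hts : tstar ≤ t
    · by_cases htt : t = tstar
      · subst htt
        simp only [if_pos rfl, if_pos (le_refl t), eq_self_iff_true, if_true]
        unfold socPrev at heq ⊢
        by_cases h0 : 0 < t.val
        · rw [dif_pos h0] at heq ⊢
          have hprev : ¬ t ≤ (⟨t.val - 1, lt_of_le_of_lt (Nat.sub_le _ _) t.isLt⟩ : Fin T) := by
            simp only [Fin.le_def]; omega
          simp only [if_neg hprev]
          rw [heq, hs]; ring
        · rw [dif_neg h0] at heq ⊢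
          rw [heq, hs]; ring
      · have hlt : tstar < t := lt_of_le_of_ne hts (Ne.symm htt)
        have h0 : 0 < t.val := by
          have := Fin.lt_def.mp hlt; omega
        simp only [if_pos hts, if_neg htt]
        unfold socPrev at heq ⊢
        rw [dif_pos h0] at heq ⊢
        have hprev : tstar ≤ (⟨t.val - 1, lt_of_le_of_lt (Nat.sub_le _ _) t.isLt⟩ : Fin T) := by
          have := Fin.lt_def.mp hlt
          simp only [Fin.le_def]; omega
        simp only [if_pos hprev]
        rw [heq]; ring
    · have htt : t ≠ tstar := fun h => hts (h ▸ le_refl t)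
      simp only [if_neg hts, if_neg htt]
      unfold socPrev at heq ⊢
      by_cases h0 : 0 < t.val
      · have hlt : t < tstar := lt_of_not_ge hts
        have hv := Fin.lt_def.mp hlt
        have hprev : ¬ tstar ≤ (⟨t.val - 1, lt_of_le_of_lt (Nat.sub_le _ _) t.isLt⟩ : Fin T) := by
          simp only [Fin.le_def]; omega
        rw [dif_pos h0] at heq ⊢
        simp only [if_neg hprev]
        exact heq
      · rw [dif_neg h0] at heq ⊢; exact heq
  · dsimp only; split_ifs with h
    · exact (hE t h).1
    · exact hel
  · dsimp only; split_ifs with h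
    · exact (hE t h).2
    · exact heu
  · dsimp only; split_ifs with h
    · subst h; exact hD1
    · exact hd0
  · dsimp only; split_ifs with h
    · subst h; exact hD2
    · exact hd1
  · dsimp only; split_ifs with h
    · subst h; exact hC1
    · exact hc0
  · dsimp only; split_ifs with h
    · subst h; exact hC2
    · exact hc1

lemma profit_perturb {T : ℕ} (π a b pD pC : Fin T → ℝ) (tstar : Fin T) (εD εC : ℝ) :
    profit π a b (fun t => if t = tstar then pD t + εD else pD t)
      (fun t => if t = tstar then pC t + εC else pC t)
    = profit π a b pD pC + (π tstar - a tstar) * εD + (b tstar - π tstar) * εC := by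
  unfold profit
  have : ∀ t : Fin T,
      (π t - a t) * (if t = tstar then pD t + εD else pD t)
        + (b t - π t) * (if t = tstar then pC t + εC else pC t)
      = ((π t - a t) * pD t + (b t - π t) * pC t)
        + (if t = tstar then (π t - a t) * εD + (b t - π t) * εC else 0) := by
    intro t; split_ifs with h <;> ring
  rw [Finset.sum_congr rfl (fun t _ => this t), Finset.sum_add_distrib,
    Finset.sum_ite_eq' univ tstar]
  simp; ring

lemma marginal_price {T : ℕ} (gDbar gCbar Elo Ehi e0 xiD xiC : ℝ)
    (hxiD : 0 < xiD) (hxiC : 0 < xiC)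
    (π a b pD pC e : Fin T → ℝ)
    (hfeas : Feasible gDbar gCbar Elo Ehi e0 xiD xiC pD pC e)
    (tstar : Fin T)
    (hmarg : (0 < pD tstar ∧ pD tstar < gDbar) ∨ (0 < pC tstar ∧ pC tstar < gCbar))
    (hsoc : ∀ t, tstar ≤ t → Elo < e t ∧ e t < Ehi)
    (hopt : ∀ x ∈ FeasSet T gDbar gCbar Elo Ehi e0 xiD xiC,
      profit π a b x.1 x.2.1 ≤ profit π a b pD pC) :
    π tstar = a tstar ∨ π tstar = b tstar := by
  have hne : (univ.filter fun t => tstar ≤ t).Nonempty := ⟨tstar, by simp⟩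
  set M := (univ.filter fun t => tstar ≤ t).inf' hne (fun t => min (e t - Elo) (Ehi - e t))
    with hMdef
  have hM : 0 < M := by
    rw [hMdef, Finset.lt_inf'_iff]
    intro t ht
    rw [Finset.mem_filter] at ht
    obtain ⟨hl, hu⟩ := hsoc t ht.2
    exact lt_min (by linarith) (by linarith)
  have hMle : ∀ t, tstar ≤ t → M ≤ e t - Elo ∧ M ≤ Ehi - e t := by
    intro t ht
    have h1 : M ≤ min (e t - Elo) (Ehi - e t) :=
      Finset.inf'_le _ (by simp [ht])
    exact ⟨le_trans h1 (min_le_left _ _), le_trans h1 (min_le_right _ _)⟩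
  obtain ⟨hfl, hfu⟩ : 0 ≤ pC tstar ∧ pC tstar ≤ gCbar :=
    ⟨(hfeas tstar).2.2.2.2.2.1, (hfeas tstar).2.2.2.2.2.2⟩
  obtain ⟨hdl, hdu⟩ : 0 ≤ pD tstar ∧ pD tstar ≤ gDbar :=
    ⟨(hfeas tstar).2.2.2.1, (hfeas tstar).2.2.2.2.1⟩
  rcases hmarg with ⟨h1, h2⟩ | ⟨h1, h2⟩
  · left
    by_contra hne'
    set ε0 := min (min (pD tstar) (gDbar - pD tstar)) (xiD * M) with hε0
    have hε0pos : 0 < ε0 := lt_min (lt_min h1 (by linarith)) (mul_pos hxiD hM)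
    have hA : ε0 ≤ pD tstar := le_trans (min_le_left _ _) (min_le_left _ _)
    have hB : ε0 ≤ gDbar - pD tstar := le_trans (min_le_left _ _) (min_le_right _ _)
    have hC' : ε0 ≤ xiD * M := min_le_right _ _
    set ε := if a tstar < π tstar then ε0 else -ε0 with hε
    have hεabs : |ε| = ε0 := by
      rw [hε]; split_ifs
      · exact abs_of_pos hε0pos
      · rw [abs_neg]; exact abs_of_pos hε0pos
    obtain ⟨hεl, hεu⟩ := abs_le.mp hεabs.le
    have hEc : ∀ t, tstar ≤ t → Elo ≤ e t + (xiC * 0 - ε / xiD) ∧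
        e t + (xiC * 0 - ε / xiD) ≤ Ehi := by
      intro t ht
      obtain ⟨hm1, hm2⟩ := hMle t ht
      have habs : |ε / xiD| ≤ M := by
        rw [abs_div, abs_of_pos hxiD, div_le_iff₀ hxiD, hεabs]
        calc ε0 ≤ xiD * M := hC'
          _ = M * xiD := mul_comm _ _
      obtain ⟨ha1, ha2⟩ := abs_le.mp habs
      have hz : xiC * (0:ℝ) = 0 := mul_zero xiC
      constructor <;> linarith
    have hfeas' := perturb_feasible gDbar gCbar Elo Ehi e0 xiD xiC pD pC e hfeas tstar ε 0
      (by linarith) (by linarith) (by linarith) (by linarith) hEc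
    have hle := hopt ⟨(fun t => if t = tstar then pD t + ε else pD t),
      (fun t => if t = tstar then pC t + 0 else pC t),
      (fun t => if tstar ≤ t then e t + (xiC * 0 - ε / xiD) else e t)⟩ hfeas'
    rw [profit_perturb] at hle
    have hkey : (π tstar - a tstar) * ε ≤ 0 := by nlinarith
    rw [hε] at hkey
    by_cases hlt : a tstar < π tstar
    · rw [if_pos hlt] at hkey; nlinarith
    · have hgt : π tstar < a tstar := lt_of_le_of_ne (not_lt.mp hlt) hne'
      rw [if_neg hlt] at hkey; nlinarith
  · right
    by_contra hne'
    set ε0 := min (min (pC tstar) (gCbar - pC tstar)) (M / xiC) with hε0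
    have hε0pos : 0 < ε0 := lt_min (lt_min h1 (by linarith)) (div_pos hM hxiC)
    have hA : ε0 ≤ pC tstar := le_trans (min_le_left _ _) (min_le_left _ _)
    have hB : ε0 ≤ gCbar - pC tstar := le_trans (min_le_left _ _) (min_le_right _ _)
    have hC' : ε0 ≤ M / xiC := min_le_right _ _
    set ε := if π tstar < b tstar then ε0 else -ε0 with hε
    have hεabs : |ε| = ε0 := by
      rw [hε]; split_ifs
      · exact abs_of_pos hε0pos
      · rw [abs_neg]; exact abs_of_pos hε0pos
    obtain ⟨hεl, hεu⟩ := abs_le.mp hεabs.le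
    have hEc : ∀ t, tstar ≤ t → Elo ≤ e t + (xiC * ε - 0 / xiD) ∧
        e t + (xiC * ε - 0 / xiD) ≤ Ehi := by
      intro t ht
      obtain ⟨hm1, hm2⟩ := hMle t ht
      have habs : |xiC * ε| ≤ M := by
        rw [abs_mul, abs_of_pos hxiC, hεabs]
        calc xiC * ε0 ≤ xiC * (M / xiC) :=
              mul_le_mul_of_nonneg_left hC' hxiC.le
          _ = M := mul_div_cancel₀ _ (ne_of_gt hxiC)
      obtain ⟨ha1, ha2⟩ := abs_le.mp habs
      have hz : (0:ℝ) / xiD = 0 := zero_div xiD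
      constructor <;> linarith
    have hfeas' := perturb_feasible gDbar gCbar Elo Ehi e0 xiD xiC pD pC e hfeas tstar 0 ε
      (by linarith) (by linarith) (by linarith) (by linarith) hEc
    have hle := hopt ⟨(fun t => if t = tstar then pD t + 0 else pD t),
      (fun t => if t = tstar then pC t + ε else pC t),
      (fun t => if tstar ≤ t then e t + (xiC * ε - 0 / xiD) else e t)⟩ hfeas'
    rw [profit_perturb] at hle
    have hkey : (b tstar - π tstar) * ε ≤ 0 := by nlinarith
    rw [hε] at hkey
    by_cases hlt : π tstar < b tstar
    · rw [if_pos hlt] at hkey; nlinarith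
    · have hgt : b tstar < π tstar := lt_of_le_of_ne (not_lt.mp hlt) (Ne.symm hne')
      rw [if_neg hlt] at hkey; nlinarith

/-- Theorem 1, LOC form: under the hypotheses of Theorem 1, for every
uniform price `π`, if `Qⁱ` and `Qʲ` are the maxima of the two ESRs' profits over their
feasible sets, then `LOCⁱ(π) + LOCʲ(π) > 0`, i.e. at least one ESR has strictly positive
lost opportunity cost. -/
theorem sum_of_LOC_positive_under_uniform_price
    (T : ℕ) (hT : 1 ≤ T)
    -- ESR i parameters
    (gDbari gCbari Eloi Ehii e0i xiDi xiCi : ℝ)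
    (hgDi : 0 < gDbari) (hgCi : 0 < gCbari) (hEi : Eloi ≤ Ehii)
    (he0il : Eloi ≤ e0i) (he0iu : e0i ≤ Ehii)
    (hxiDi0 : 0 < xiDi) (hxiDi1 : xiDi ≤ 1) (hxiCi0 : 0 < xiCi) (hxiCi1 : xiCi ≤ 1)
    -- ESR j parameters
    (gDbarj gCbarj Eloj Ehij e0j xiDj xiCj : ℝ)
    (hgDj : 0 < gDbarj) (hgCj : 0 < gCbarj) (hEj : Eloj ≤ Ehij)
    (he0jl : Eloj ≤ e0j) (he0ju : e0j ≤ Ehij)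
    (hxiDj0 : 0 < xiDj) (hxiDj1 : xiDj ≤ 1) (hxiCj0 : 0 < xiCj) (hxiCj1 : xiCj ≤ 1)
    -- bid-in marginal costs
    (ai bi aj bj : Fin T → ℝ)
    -- dispatches (feasible schedules)
    (gDi gCi ei gDj gCj ej : Fin T → ℝ)
    (hfeasi : Feasible gDbari gCbari Eloi Ehii e0i xiDi xiCi gDi gCi ei)
    (hfeasj : Feasible gDbarj gCbarj Eloj Ehij e0j xiDj xiCj gDj gCj ej)
    (tstar : Fin T)
    -- (1) distinct bid-in marginal costs at t*
    (hdist1 : ai tstar ≠ aj tstar) (hdist2 : ai tstar ≠ bj tstar)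
    (hdist3 : bi tstar ≠ aj tstar) (hdist4 : bi tstar ≠ bj tstar)
    -- (2) both ESRs are marginal at t*
    (hmargi : (0 < gDi tstar ∧ gDi tstar < gDbari) ∨ (0 < gCi tstar ∧ gCi tstar < gCbari))
    (hmargj : (0 < gDj tstar ∧ gDj tstar < gDbarj) ∨ (0 < gCj tstar ∧ gCj tstar < gCbarj))
    -- (3) SOC strictly inside its bounds from t* to the end of the horizon
    (hsoci : ∀ t : Fin T, tstar ≤ t → Eloi < ei t ∧ ei t < Ehii)
    (hsocj : ∀ t : Fin T, tstar ≤ t → Eloj < ej t ∧ ej t < Ehij) :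
    ∀ π : Fin T → ℝ, ∀ Qi Qj : ℝ,
      IsGreatest ((fun x => profit π ai bi x.1 x.2.1) ''
        FeasSet T gDbari gCbari Eloi Ehii e0i xiDi xiCi) Qi →
      IsGreatest ((fun x => profit π aj bj x.1 x.2.1) ''
        FeasSet T gDbarj gCbarj Eloj Ehij e0j xiDj xiCj) Qj →
      0 < (Qi - profit π ai bi gDi gCi) + (Qj - profit π aj bj gDj gCj) := by
  intro π Qi Qj hQi hQj
  have hi0 : profit π ai bi gDi gCi ≤ Qi := hQi.2 ⟨(gDi, gCi, ei), hfeasi, rfl⟩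
  have hj0 : profit π aj bj gDj gCj ≤ Qj := hQj.2 ⟨(gDj, gCj, ej), hfeasj, rfl⟩
  by_contra hcon
  push_neg at hcon
  have hQieq : Qi = profit π ai bi gDi gCi := by linarith
  have hQjeq : Qj = profit π aj bj gDj gCj := by linarith
  have hopti : ∀ x ∈ FeasSet T gDbari gCbari Eloi Ehii e0i xiDi xiCi,
      profit π ai bi x.1 x.2.1 ≤ profit π ai bi gDi gCi := by
    intro x hx
    have := hQi.2 ⟨x, hx, rfl⟩
    linarith
  have hoptj : ∀ x ∈ FeasSet T gDbarj gCbarj Eloj Ehij e0j xiDj xiCj,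
      profit π aj bj x.1 x.2.1 ≤ profit π aj bj gDj gCj := by
    intro x hx
    have := hQj.2 ⟨x, hx, rfl⟩
    linarith
  have hi := marginal_price gDbari gCbari Eloi Ehii e0i xiDi xiCi hxiDi0 hxiCi0
    π ai bi gDi gCi ei hfeasi tstar hmargi hsoci hopti
  have hj := marginal_price gDbarj gCbarj Eloj Ehij e0j xiDj xiCj hxiDj0 hxiCj0
    π aj bj gDj gCj ej hfeasj tstar hmargj hsocj hoptj
  rcases hi with hi | hi <;> rcases hj with hj | hj
  · exact hdist1 (hi.symm.trans hj)
  · exact hdist2 (hi.symm.trans hj)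
  · exact hdist3 (hi.symm.trans hj)
  · exact hdist4 (hi.symm.trans hj)
end

section
/- (Theorem 3, first part: zero lost opportunity cost under TLMP.) Suppose (gᴰ,gᶜ,e) is a feasible ESR schedule and there exist vectors λ, φ ∈ ℝᵀ and nonnegative vectors ρ̲ᴰ, ρ̄ᴰ, ρ̲ᶜ, ρ̄ᶜ ∈ ℝᵀ satisfying, for every t = 1,…,T, the stationarity conditions of the multi-interval economic dispatch, a_t − λ_t + φ_t/ξᴰ + ρ̄ᴰ_t − ρ̲ᴰ_t = 0 and −b_t + λ_t − ξᶜ φ_t + ρ̄ᶜ_t − ρ̲ᶜ_t = 0, together with the complementary slackness conditions ρ̲ᴰ_t gᴰ_t = 0, ρ̄ᴰ_t (ḡᴰ − gᴰ_t) = 0, ρ̲ᶜ_t gᶜ_t = 0, ρ̄ᶜ_t (ḡᶜ − gᶜ_t) = 0. Define the TLMP prices πᴰ_t = λ_t − φ_t/ξᴰ and πᶜ_t = λ_t − ξᶜ φ_t. Then (gᴰ,gᶜ,e) maximizes the profit Σ_{t=1}^T [(πᴰ_t − a_t) pᴰ_t + (b_t − πᶜ_t) pᶜ_t] over all feasible schedules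 (pᴰ,pᶜ,e′); in particular, the ESR's lost opportunity cost under TLMP is zero. -/
open Finset

/-- Profit of a schedule under (possibly non-uniform) discharging prices `πD` and
charging prices `πC`, with marginal discharging costs `a` and charging benefits `b`. -/
noncomputable def profitNU {T : ℕ} (piD piC a b pD pC : Fin T → ℝ) : ℝ :=
  ∑ t, ((piD t - a t) * pD t + (b t - piC t) * pC t)

/-- Theorem 3, first part: if a feasible ESR schedule satisfies the
stationarity and complementary-slackness conditions of the multi-interval economic
dispatch with multipliers `λ` (energy price) and `φ` (SOC price), then under the TLMP
prices `πᴰ_t = λ_t − φ_t/ξᴰ` and `πᶜ_t = λ_t − ξᶜ φ_t` the schedule maximizes the ESR's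
profit over the feasible set; in particular its lost opportunity cost is zero. -/
theorem TLMP_zero_LOC_for_ESR
    (T : ℕ) (hT : 1 ≤ T)
    (gDbar gCbar Elo Ehi e0 xiD xiC : ℝ)
    (hgD : 0 < gDbar) (hgC : 0 < gCbar) (hE : Elo ≤ Ehi)
    (he0l : Elo ≤ e0) (he0u : e0 ≤ Ehi)
    (hxiD0 : 0 < xiD) (hxiD1 : xiD ≤ 1) (hxiC0 : 0 < xiC) (hxiC1 : xiC ≤ 1)
    (a b : Fin T → ℝ)
    (gD gC e : Fin T → ℝ)
    (hfeas : Feasible gDbar gCbar Elo Ehi e0 xiD xiC gD gC e)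
    (lam phi : Fin T → ℝ)
    (rhoDl rhoDu rhoCl rhoCu : Fin T → ℝ)
    (hrhoDl : ∀ t, 0 ≤ rhoDl t) (hrhoDu : ∀ t, 0 ≤ rhoDu t)
    (hrhoCl : ∀ t, 0 ≤ rhoCl t) (hrhoCu : ∀ t, 0 ≤ rhoCu t)
    -- stationarity of the multi-interval economic dispatch
    (hstatD : ∀ t, a t - lam t + phi t / xiD + rhoDu t - rhoDl t = 0)
    (hstatC : ∀ t, -(b t) + lam t - xiC * phi t + rhoCu t - rhoCl t = 0)
    -- complementary slackness
    (hcsDl : ∀ t, rhoDl t * gD t = 0) (hcsDu : ∀ t, rhoDu t * (gDbar - gD t) = 0)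
    (hcsCl : ∀ t, rhoCl t * gC t = 0) (hcsCu : ∀ t, rhoCu t * (gCbar - gC t) = 0)
    -- the TLMP prices
    (piD piC : Fin T → ℝ)
    (hpiD : ∀ t, piD t = lam t - phi t / xiD)
    (hpiC : ∀ t, piC t = lam t - xiC * phi t) :
    ∀ pD pC e' : Fin T → ℝ,
      Feasible gDbar gCbar Elo Ehi e0 xiD xiC pD pC e' →
      profitNU piD piC a b pD pC ≤ profitNU piD piC a b gD gC := by
  intro pD pC e' hfeas'
  unfold profitNU
  apply Finset.sum_le_sum
  intro t _
  obtain ⟨-, -, -, hgD0, hgDu, hgC0, hgCu⟩ := hfeas t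
  obtain ⟨-, -, -, hpD0, hpDu, hpC0, hpCu⟩ := hfeas' t
  have hD : piD t - a t = rhoDu t - rhoDl t := by
    have := hstatD t; rw [hpiD t]; linarith
  have hC : b t - piC t = rhoCu t - rhoCl t := by
    have := hstatC t; rw [hpiC t]; linarith
  have h1 : (piD t - a t) * pD t ≤ (piD t - a t) * gD t := by
    rw [hD]
    have e1 := hcsDl t; have e2 := hcsDu t
    nlinarith [hrhoDl t, hrhoDu t, mul_nonneg (hrhoDl t) hpD0,
      mul_le_mul_of_nonneg_left hpDu (hrhoDu t)]
  have h2 : (b t - piC t) * pC t ≤ (b t - piC t) * gC t := by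
    rw [hC]
    have e1 := hcsCl t; have e2 := hcsCu t
    nlinarith [hrhoCl t, hrhoCu t, mul_nonneg (hrhoCl t) hpC0,
      mul_le_mul_of_nonneg_left hpCu (hrhoCu t)]
  linarith
end

section
/- (Per-interval decoupling under TLMP.) Under the hypotheses of the previous statement — a feasible ESR schedule (gᴰ,gᶜ,e) with multipliers λ, φ ∈ ℝᵀ and nonnegative ρ̲ᴰ, ρ̄ᴰ, ρ̲ᶜ, ρ̄ᶜ satisfying a_t − λ_t + φ_t/ξᴰ + ρ̄ᴰ_t − ρ̲ᴰ_t = 0, −b_t + λ_t − ξᶜ φ_t + ρ̄ᶜ_t − ρ̲ᶜ_t = 0 and complementary slackness with the power bounds — and with TLMP prices πᴰ_t = λ_t − φ_t/ξᴰ and πᶜ_t = λ_t − ξᶜ φ_t, the dispatch maximizes each interval's profit separately: for every t and every x ∈ [0, ḡᴰ], (πᴰ_t − a_t) x ≤ (πᴰ_t − a_t) gᴰ_t, and for every y ∈ [0, ḡᶜ], (b_t − πᶜ_t) y ≤ (b_t − πᶜ_t) gᶜ_t. In particular, under TLMP the multi-interval ESR problem decouples into single-interval problems and the intertemporal SOC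 constraints place no further restriction on optimality. -/
open Finset

/-- per-interval decoupling under TLMP: under the KKT conditions of the
multi-interval dispatch and the TLMP prices, the dispatch maximizes each interval's
profit separately over the power bounds alone — the intertemporal SOC constraints place
no further restriction on optimality. -/
theorem TLMP_per_interval_decoupling
    (T : ℕ) (hT : 1 ≤ T)
    (gDbar gCbar Elo Ehi e0 xiD xiC : ℝ)
    (hgD : 0 < gDbar) (hgC : 0 < gCbar) (hE : Elo ≤ Ehi)
    (he0l : Elo ≤ e0) (he0u : e0 ≤ Ehi)
    (hxiD0 : 0 < xiD) (hxiD1 : xiD ≤ 1) (hxiC0 : 0 < xiC) (hxiC1 : xiC ≤ 1)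
    (a b : Fin T → ℝ)
    (gD gC e : Fin T → ℝ)
    (hfeas : Feasible gDbar gCbar Elo Ehi e0 xiD xiC gD gC e)
    (lam phi : Fin T → ℝ)
    (rhoDl rhoDu rhoCl rhoCu : Fin T → ℝ)
    (hrhoDl : ∀ t, 0 ≤ rhoDl t) (hrhoDu : ∀ t, 0 ≤ rhoDu t)
    (hrhoCl : ∀ t, 0 ≤ rhoCl t) (hrhoCu : ∀ t, 0 ≤ rhoCu t)
    -- stationarity of the multi-interval economic dispatch
    (hstatD : ∀ t, a t - lam t + phi t / xiD + rhoDu t - rhoDl t = 0)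
    (hstatC : ∀ t, -(b t) + lam t - xiC * phi t + rhoCu t - rhoCl t = 0)
    -- complementary slackness with the power bounds
    (hcsDl : ∀ t, rhoDl t * gD t = 0) (hcsDu : ∀ t, rhoDu t * (gDbar - gD t) = 0)
    (hcsCl : ∀ t, rhoCl t * gC t = 0) (hcsCu : ∀ t, rhoCu t * (gCbar - gC t) = 0)
    -- the TLMP prices
    (piD piC : Fin T → ℝ)
    (hpiD : ∀ t, piD t = lam t - phi t / xiD)
    (hpiC : ∀ t, piC t = lam t - xiC * phi t) :
    ∀ t : Fin T,
      (∀ x : ℝ, 0 ≤ x → x ≤ gDbar → (piD t - a t) * x ≤ (piD t - a t) * gD t) ∧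
      (∀ y : ℝ, 0 ≤ y → y ≤ gCbar → (b t - piC t) * y ≤ (b t - piC t) * gC t) := by
  intro t
  have hD : piD t - a t = rhoDu t - rhoDl t := by
    have := hstatD t; rw [hpiD t]; linarith
  have hC : b t - piC t = rhoCu t - rhoCl t := by
    have := hstatC t; rw [hpiC t]; linarith
  constructor
  · intro x hx0 hxu
    rw [hD]
    nlinarith [hcsDl t, hcsDu t, mul_nonneg (hrhoDu t) (sub_nonneg.mpr hxu),
      mul_nonneg (hrhoDl t) hx0]
  · intro y hy0 hyu
    rw [hC]
    nlinarith [hcsCl t, hcsCu t, mul_nonneg (hrhoCu t) (sub_nonneg.mpr hyu),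
      mul_nonneg (hrhoCl t) hy0]
end

section
/- (Theorem 3, second part: truthful bidding is optimal for a price-taking ESR under TLMP.) Let qᴰ, qᶜ ∈ ℝᵀ be the ESR's true linear marginal discharging costs and charging benefits, and let πᴰ, πᶜ ∈ ℝᵀ be fixed price vectors (price-taker assumption: the ESR's bid does not affect prices). Suppose the truthful-bid dispatch (gᴰ,gᶜ,e) is a feasible schedule admitting vectors λ, φ ∈ ℝᵀ and nonnegative ρ̲ᴰ, ρ̄ᴰ, ρ̲ᶜ, ρ̄ᶜ ∈ ℝᵀ with qᴰ_t − λ_t + φ_t/ξᴰ + ρ̄ᴰ_t − ρ̲ᴰ_t = 0, −qᶜ_t + λ_t − ξᶜ φ_t + ρ̄ᶜ_t − ρ̲ᶜ_t = 0, complementary slackness ρ̲ᴰ_t gᴰ_t = 0, ρ̄ᴰ_t (ḡᴰ − gᴰ_t) = 0, ρ̲ᶜ_t gᶜ_t = 0, ρ̄ᶜ_t (ḡᶜ − gᶜ_t) = 0, and πᴰ_t = λ_t − φ_t/ξᴰ, πᶜ_t = λ_t − ξᶜ φ_t for all t. Then for every feasible schedule (pᴰ,pᶜ,e′) — in particular for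 the dispatch that would result from any alternative (untruthful) bid — the true profit satisfies Σ_{t=1}^T [(πᴰ_t − qᴰ_t) pᴰ_t + (qᶜ_t − πᶜ_t) pᶜ_t] ≤ Σ_{t=1}^T [(πᴰ_t − qᴰ_t) gᴰ_t + (qᶜ_t − πᶜ_t) gᶜ_t]; hence no alternative bid can yield the price-taking ESR a higher profit than truthful bidding. -/
open Finset

/-- Theorem 3, second part: under TLMP, truthful bidding is optimal for a
price-taking ESR. If the truthful-bid dispatch satisfies the KKT conditions of the
economic dispatch with the true marginal costs `qᴰ, qᶜ`, and the TLMP prices are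
`πᴰ_t = λ_t − φ_t/ξᴰ`, `πᶜ_t = λ_t − ξᶜ φ_t`, then the true profit at any feasible
schedule — in particular at the dispatch resulting from any alternative bid — is at
most the true profit at the truthful-bid dispatch. -/
theorem TLMP_truthful_bidding_optimal
    (T : ℕ) (hT : 1 ≤ T)
    (gDbar gCbar Elo Ehi e0 xiD xiC : ℝ)
    (hgD : 0 < gDbar) (hgC : 0 < gCbar) (hE : Elo ≤ Ehi)
    (he0l : Elo ≤ e0) (he0u : e0 ≤ Ehi)
    (hxiD0 : 0 < xiD) (hxiD1 : xiD ≤ 1) (hxiC0 : 0 < xiC) (hxiC1 : xiC ≤ 1)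
    -- true marginal discharging costs and charging benefits
    (qD qC : Fin T → ℝ)
    -- truthful-bid dispatch
    (gD gC e : Fin T → ℝ)
    (hfeas : Feasible gDbar gCbar Elo Ehi e0 xiD xiC gD gC e)
    (lam phi : Fin T → ℝ)
    (rhoDl rhoDu rhoCl rhoCu : Fin T → ℝ)
    (hrhoDl : ∀ t, 0 ≤ rhoDl t) (hrhoDu : ∀ t, 0 ≤ rhoDu t)
    (hrhoCl : ∀ t, 0 ≤ rhoCl t) (hrhoCu : ∀ t, 0 ≤ rhoCu t)
    -- stationarity with the true marginal costs
    (hstatD : ∀ t, qD t - lam t + phi t / xiD + rhoDu t - rhoDl t = 0)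
    (hstatC : ∀ t, -(qC t) + lam t - xiC * phi t + rhoCu t - rhoCl t = 0)
    -- complementary slackness
    (hcsDl : ∀ t, rhoDl t * gD t = 0) (hcsDu : ∀ t, rhoDu t * (gDbar - gD t) = 0)
    (hcsCl : ∀ t, rhoCl t * gC t = 0) (hcsCu : ∀ t, rhoCu t * (gCbar - gC t) = 0)
    -- fixed TLMP prices (price-taker assumption)
    (piD piC : Fin T → ℝ)
    (hpiD : ∀ t, piD t = lam t - phi t / xiD)
    (hpiC : ∀ t, piC t = lam t - xiC * phi t) :
    ∀ pD pC e' : Fin T → ℝ,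
      Feasible gDbar gCbar Elo Ehi e0 xiD xiC pD pC e' →
      profitNU piD piC qD qC pD pC ≤ profitNU piD piC qD qC gD gC := by
  intro pD pC e' hp
  unfold profitNU
  apply Finset.sum_le_sum
  intro t _
  have hD : piD t - qD t = rhoDu t - rhoDl t := by
    have := hstatD t; rw [hpiD t]; linarith
  have hC : qC t - piC t = rhoCu t - rhoCl t := by
    have := hstatC t; rw [hpiC t]; linarith
  obtain ⟨-, -, -, hpD0, hpDu, hpC0, hpCu⟩ := hp t
  obtain ⟨-, -, -, hgD0, hgDu, hgC0, hgCu⟩ := hfeas t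
  rw [hD, hC]
  have h1 := hcsDl t; have h2 := hcsDu t; have h3 := hcsCl t; have h4 := hcsCu t
  have := hrhoDl t; have := hrhoDu t; have := hrhoCl t; have := hrhoCu t
  nlinarith [mul_nonneg (hrhoDl t) hpD0, mul_nonneg (hrhoCl t) hpC0,
    mul_nonneg (hrhoDu t) (sub_nonneg.2 hpDu), mul_nonneg (hrhoCu t) (sub_nonneg.2 hpCu)]
end

section
/- (Theorem 2, discharging-bid version: truthful bidding is suboptimal under uniform pricing with LOC uplifts.) In the setting of the previous statement — uniform price π ∈ ℝᵀ, true marginal costs qᴰ, qᶜ ∈ ℝᵀ, interval t*, discharging bid parameter θ entering the bid cost F(x,θ) = θ·x_{t*} + Σ_{t≠t*} a_t x_t, dispatch maps gᴰ, gᶜ : ℝ → ℝᵀ and self-schedule maps pᴰ, pᶜ : ℝ → ℝᵀ constant on a neighborhood of θ*, and total profit Π(θ) equal to the true surplus at the dispatch plus the lost opportunity cost LOC(θ) — if gᴰ_{t*}(θ*) ≠ pᴰ_{t*}(θ*), then θ* is not a local maximum of Π: in every neighborhood of θ* there is a bid θ with Π(θ) > Π(θ*). In particular, it is suboptimal for the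 price-taking ESR to bid its true marginal discharging cost. -/
open Finset

/-- Bid-in discharging cost of the schedule `x` when the discharging bid at interval
`t*` is `θ` and the remaining bids are `a`: `F(x,θ) = θ·x_{t*} + Σ_{t≠t*} a_t x_t`. -/
noncomputable def bidF {T : ℕ} (a : Fin T → ℝ) (tstar : Fin T) (x : Fin T → ℝ)
    (θ : ℝ) : ℝ :=
  θ * x tstar + ∑ t ∈ Finset.univ.erase tstar, a t * x t

/-- Bid-in charging benefit of the schedule `y` with bids `b`: `H(y) = Σ_t b_t y_t`. -/
noncomputable def bidH {T : ℕ} (b y : Fin T → ℝ) : ℝ := ∑ t, b t * y t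

/-- Lost opportunity cost as a function of the discharging bid parameter `θ`:
the profit (at bid-in costs) of the self-schedule `(pᴰ(θ),pᶜ(θ))` minus the profit
(at bid-in costs) of the dispatch `(gᴰ(θ),gᶜ(θ))`, under the uniform price `π`. -/
noncomputable def LOCfun {T : ℕ} (π a b : Fin T → ℝ) (tstar : Fin T)
    (gD gC pD pC : ℝ → Fin T → ℝ) (θ : ℝ) : ℝ :=
  ((∑ t, π t * pD θ t) - bidF a tstar (pD θ) θ + bidH b (pC θ) - ∑ t, π t * pC θ t)
  - ((∑ t, π t * gD θ t) - bidF a tstar (gD θ) θ + bidH b (gC θ) - ∑ t, π t * gC θ t)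

/-- Total profit of the price-taking ESR as a function of the discharging bid
parameter `θ`: true surplus at the dispatch plus the LOC uplift. -/
noncomputable def totalProfit {T : ℕ} (π qD qC a b : Fin T → ℝ) (tstar : Fin T)
    (gD gC pD pC : ℝ → Fin T → ℝ) (θ : ℝ) : ℝ :=
  (∑ t, π t * gD θ t) - (∑ t, qD t * gD θ t) + (∑ t, qC t * gC θ t)
  - (∑ t, π t * gC θ t) + LOCfun π a b tstar gD gC pD pC θ

/-- Theorem 2, discharging-bid version: if the dispatch and
self-schedule maps are constant on a neighborhood of `θ*` and the dispatched and
self-scheduled discharging quantities at `t*` differ, then `θ*` is not a local maximum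
of the total profit `Π`: every neighborhood of `θ*` contains a bid with strictly higher
profit. In particular, truthful bidding is suboptimal under uniform pricing with LOC
uplifts. -/
theorem truthful_bidding_suboptimal_discharging
    (T : ℕ) (hT : 1 ≤ T)
    (π qD qC a b : Fin T → ℝ) (tstar : Fin T)
    (gD gC pD pC : ℝ → Fin T → ℝ) (θstar : ℝ)
    (hconst : ∃ ε > 0, ∀ θ : ℝ, |θ - θstar| < ε →
      gD θ = gD θstar ∧ gC θ = gC θstar ∧ pD θ = pD θstar ∧ pC θ = pC θstar)
    (hneq : gD θstar tstar ≠ pD θstar tstar) :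
    ∀ ε > (0:ℝ), ∃ θ : ℝ, |θ - θstar| < ε ∧
      totalProfit π qD qC a b tstar gD gC pD pC θstar <
      totalProfit π qD qC a b tstar gD gC pD pC θ := by
  obtain ⟨ε0, hε0, hc⟩ := hconst
  intro ε hε
  set d := gD θstar tstar - pD θstar tstar with hd
  have hdne : d ≠ 0 := sub_ne_zero.mpr hneq
  set δ := min ε ε0 / 2 with hδ
  have hδpos : 0 < δ := by positivity
  set θ := θstar + (if 0 < d then δ else -δ) with hθ
  have habs : |θ - θstar| < min ε ε0 := by
    have : θ - θstar = (if 0 < d then δ else -δ) := by simp [hθ]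
    rw [this]
    have : |(if 0 < d then δ else -δ)| = δ := by
      split <;> simp [abs_of_pos hδpos]
    rw [this]
    exact half_lt_self (lt_min hε hε0)
  refine ⟨θ, lt_of_lt_of_le habs (min_le_left _ _), ?_⟩
  obtain ⟨h1, h2, h3, h4⟩ := hc θ (lt_of_lt_of_le habs (min_le_right _ _))
  have key : totalProfit π qD qC a b tstar gD gC pD pC θ
      - totalProfit π qD qC a b tstar gD gC pD pC θstar
      = (θ - θstar) * d := by
    simp only [totalProfit, LOCfun, bidF, bidH, h1, h2, h3, h4, hd]
    ring
  have hθd : 0 < (θ - θstar) * d := by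
    have : θ - θstar = (if 0 < d then δ else -δ) := by simp [hθ]
    rw [this]
    rcases lt_trichotomy 0 d with h | h | h
    · simp [h]; positivity
    · exact absurd h.symm hdne
    · rw [if_neg (by linarith)]
      have := mul_pos hδpos (neg_pos.mpr h)
      nlinarith
  linarith [key ▸ hθd]
end

section
/- (Theorem 2, charging-bid version.) Fix a uniform price π ∈ ℝᵀ, true marginal costs qᴰ, qᶜ ∈ ℝᵀ, baseline bid parameters a, b ∈ ℝᵀ, and an interval t*. For a scalar charging bid parameter θ ∈ ℝ, define the bid-in charging benefit of y ∈ ℝᵀ as H(y,θ) = θ·y_{t*} + Σ_{t≠t*} b_t y_t and the bid-in discharging cost of x ∈ ℝᵀ as F(x) = Σ_t a_t x_t. Let the dispatch maps gᴰ, gᶜ : ℝ → ℝᵀ and self-schedule maps pᴰ, pᶜ : ℝ → ℝᵀ be constant on a neighborhood of θ*. Define LOC(θ) = [Σ_t π_t pᴰ_t(θ) − F(pᴰ(θ)) + H(pᶜ(θ),θ) − Σ_t π_t pᶜ_t(θ)] − [Σ_t π_t gᴰ_t(θ) − F(gᴰ(θ)) + H(gᶜ(θ),θ) − Σ_t π_t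 gᶜ_t(θ)] and Π(θ) = Σ_t π_t gᴰ_t(θ) − Σ_t qᴰ_t gᴰ_t(θ) + Σ_t qᶜ_t gᶜ_t(θ) − Σ_t π_t gᶜ_t(θ) + LOC(θ). Then Π is differentiable at θ* with Π′(θ*) = pᶜ_{t*}(θ*) − gᶜ_{t*}(θ*); and if gᶜ_{t*}(θ*) ≠ pᶜ_{t*}(θ*), then θ* is not a local maximum of Π, so it is suboptimal for the price-taking ESR to bid its true marginal charging benefit. -/
open Finset

/-- Bid-in charging benefit of the schedule `y` when the charging bid at interval `t*`
is `θ` and the remaining bids are `b`: `H(y,θ) = θ·y_{t*} + Σ_{t≠t*} b_t y_t`. -/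
noncomputable def bidHθ {T : ℕ} (b : Fin T → ℝ) (tstar : Fin T) (y : Fin T → ℝ)
    (θ : ℝ) : ℝ :=
  θ * y tstar + ∑ t ∈ Finset.univ.erase tstar, b t * y t

/-- Bid-in discharging cost of the schedule `x` with bids `a`: `F(x) = Σ_t a_t x_t`. -/
noncomputable def bidFc {T : ℕ} (a x : Fin T → ℝ) : ℝ := ∑ t, a t * x t

/-- Lost opportunity cost as a function of the charging bid parameter `θ`. -/
noncomputable def LOCfunC {T : ℕ} (π a b : Fin T → ℝ) (tstar : Fin T)
    (gD gC pD pC : ℝ → Fin T → ℝ) (θ : ℝ) : ℝ :=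
  ((∑ t, π t * pD θ t) - bidFc a (pD θ) + bidHθ b tstar (pC θ) θ - ∑ t, π t * pC θ t)
  - ((∑ t, π t * gD θ t) - bidFc a (gD θ) + bidHθ b tstar (gC θ) θ - ∑ t, π t * gC θ t)

/-- Total profit of the price-taking ESR as a function of the charging bid parameter
`θ`: true surplus at the dispatch plus the LOC uplift. -/
noncomputable def totalProfitC {T : ℕ} (π qD qC a b : Fin T → ℝ) (tstar : Fin T)
    (gD gC pD pC : ℝ → Fin T → ℝ) (θ : ℝ) : ℝ :=
  (∑ t, π t * gD θ t) - (∑ t, qD t * gD θ t) + (∑ t, qC t * gC θ t)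
  - (∑ t, π t * gC θ t) + LOCfunC π a b tstar gD gC pD pC θ

/-- Theorem 2, charging-bid version: if the dispatch and self-schedule
maps are constant on a neighborhood of `θ*`, then the total profit `Π` is differentiable
at `θ*` with `Π′(θ*) = pᶜ_{t*}(θ*) − gᶜ_{t*}(θ*)`; and if the dispatched and
self-scheduled charging quantities at `t*` differ, then `θ*` is not a local maximum of
`Π`, so truthful bidding of the marginal charging benefit is suboptimal. -/
theorem truthful_bidding_suboptimal_charging
    (T : ℕ) (hT : 1 ≤ T)
    (π qD qC a b : Fin T → ℝ) (tstar : Fin T)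
    (gD gC pD pC : ℝ → Fin T → ℝ) (θstar : ℝ)
    (hconst : ∃ ε > 0, ∀ θ : ℝ, |θ - θstar| < ε →
      gD θ = gD θstar ∧ gC θ = gC θstar ∧ pD θ = pD θstar ∧ pC θ = pC θstar) :
    HasDerivAt (totalProfitC π qD qC a b tstar gD gC pD pC)
      (pC θstar tstar - gC θstar tstar) θstar ∧
    (gC θstar tstar ≠ pC θstar tstar →
      ∀ ε > (0:ℝ), ∃ θ : ℝ, |θ - θstar| < ε ∧
        totalProfitC π qD qC a b tstar gD gC pD pC θstar <
        totalProfitC π qD qC a b tstar gD gC pD pC θ) := by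
  obtain ⟨ε, hε, hc⟩ := hconst
  set s := pC θstar tstar - gC θstar tstar with hs
  have key : ∀ θ : ℝ, |θ - θstar| < ε →
      totalProfitC π qD qC a b tstar gD gC pD pC θ
        = totalProfitC π qD qC a b tstar gD gC pD pC θstar + (θ - θstar) * s := by
    intro θ hθ
    obtain ⟨h1, h2, h3, h4⟩ := hc θ hθ
    simp only [totalProfitC, LOCfunC, bidHθ, bidFc, h1, h2, h3, h4, hs]
    ring
  constructor
  · have haff : HasDerivAt (fun θ =>
        totalProfitC π qD qC a b tstar gD gC pD pC θstar + (θ - θstar) * s) s θstar := by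
      have h := (((hasDerivAt_id θstar).sub_const θstar).mul_const s).const_add
        (totalProfitC π qD qC a b tstar gD gC pD pC θstar)
      simpa using h
    apply haff.congr_of_eventuallyEq
    filter_upwards [Metric.ball_mem_nhds θstar hε] with θ hθ
    rw [Metric.mem_ball, Real.dist_eq] at hθ
    exact key θ hθ
  · intro hne ε' hε'
    have hs0 : s ≠ 0 := sub_ne_zero.mpr (Ne.symm hne)
    set δ := min ε ε' / 2 with hδ
    have hδpos : 0 < δ := by
      have := lt_min hε hε'
      positivity
    have hδε : δ < ε := by
      calc δ < min ε ε' := by simpa [hδ] using half_lt_self (lt_min hε hε')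
        _ ≤ ε := min_le_left _ _
    have hδε' : δ < ε' := by
      calc δ < min ε ε' := by simpa [hδ] using half_lt_self (lt_min hε hε')
        _ ≤ ε' := min_le_right _ _
    refine ⟨θstar + (if 0 < s then δ else -δ), ?_, ?_⟩
    · have habs : |θstar + (if 0 < s then δ else -δ) - θstar| = δ := by
        split <;> simp [abs_of_pos hδpos]
      rw [habs]; exact hδε'
    · have hkey := key (θstar + (if 0 < s then δ else -δ)) (by
        have habs : |θstar + (if 0 < s then δ else -δ) - θstar| = δ := by
          split <;> simp [abs_of_pos hδpos]
        rw [habs]; exact hδε)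
      rw [hkey]
      have hpos : 0 < (θstar + (if 0 < s then δ else -δ) - θstar) * s := by
        rcases lt_or_ge 0 s with h | h
        · simp only [if_pos h]
          have : θstar + δ - θstar = δ := by ring
          rw [this]; exact mul_pos hδpos h
        · simp only [if_neg (not_lt.mpr h)]
          have : θstar + -δ - θstar = -δ := by ring
          rw [this]
          have hlt : s < 0 := lt_of_le_of_ne h hs0
          exact mul_pos_of_neg_of_neg (neg_neg_of_pos hδpos) hlt
      linarith
end

section
/- (Generator decoupling under TLMP.) Consider a single generator with linear bid-in marginal costs c ∈ ℝᵀ, capacity ḡ > 0, ramp limits r̄, r̲ > 0 and given initial output g₀; its feasible set consists of g ∈ ℝᵀ with 0 ≤ g_t ≤ ḡ for all t and −r̲ ≤ g_{t+1} − g_t ≤ r̄ for t = 0,…,T−1. Suppose g is feasible and there exist λ ∈ ℝᵀ and nonnegative multipliers μ̄_t, μ̲_t (t = 0,…,T−1) and ρ̄_t, ρ̲_t (t = 1,…,T) satisfying complementary slackness — μ̄_t (r̄ − g_{t+1} + g_t) = 0, μ̲_t (r̲ + g_{t+1} − g_t) = 0, ρ̲_t g_t = 0, ρ̄_t (ḡ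 − g_t) = 0 — and the stationarity conditions c_t − λ_t + Δμ_{t−1} − Δμ_t + ρ̄_t − ρ̲_t = 0 for t = 1,…,T, where Δμ_t = μ̄_t − μ̲_t and Δμ_T := 0. Define the generator's TLMP by π_t = λ_t + Δμ_t − Δμ_{t−1} (energy price plus ramping price). Then g maximizes the generator's profit Σ_{t=1}^T (π_t − c_t) x_t over all x ∈ ℝᵀ with 0 ≤ x_t ≤ ḡ for all t — in particular over the generator's feasible set — so the generator's lost opportunity cost under TLMP is zero. -/
open Finset

/-- Feasibility of a generator production schedule `g` over intervals `t = 1,…,T`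
(index `0` holds the given initial output `g₀`): capacity and ramp limits. -/
def GenFeasible (T : ℕ) (gbar rup rdn g0 : ℝ) (g : ℕ → ℝ) : Prop :=
  g 0 = g0 ∧ ∀ t ∈ Finset.Icc 1 T,
    0 ≤ g t ∧ g t ≤ gbar ∧ g t - g (t - 1) ≤ rup ∧ g (t - 1) - g t ≤ rdn

/-- generator decoupling under TLMP: if a feasible generator schedule
admits multipliers satisfying the KKT conditions of the dispatch, then under the TLMP
prices `π_t = λ_t + Δμ_t − Δμ_{t−1}` (energy price plus ramping price) the schedule
maximizes the generator's profit over all schedules satisfying the capacity bounds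
alone — in particular over the generator's feasible set — so its lost opportunity cost
under TLMP is zero. -/
theorem generator_decoupling_under_TLMP
    (T : ℕ) (hT : 1 ≤ T)
    (c : ℕ → ℝ) (gbar rup rdn g0 : ℝ)
    (hgbar : 0 < gbar) (hrup : 0 < rup) (hrdn : 0 < rdn)
    (g : ℕ → ℝ)
    (hfeas : GenFeasible T gbar rup rdn g0 g)
    (lam : ℕ → ℝ)
    (mub mul : ℕ → ℝ)          -- ramp multipliers, for t = 0,…,T−1
    (rhou rhol : ℕ → ℝ)        -- capacity multipliers, for t = 1,…,T
    -- nonnegativity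
    (hmu_nn : ∀ t < T, 0 ≤ mub t ∧ 0 ≤ mul t)
    (hrho_nn : ∀ t ∈ Finset.Icc 1 T, 0 ≤ rhou t ∧ 0 ≤ rhol t)
    -- convention Δμ_T := 0
    (hmuT : mub T = 0 ∧ mul T = 0)
    -- complementary slackness
    (hcs_ramp : ∀ t < T,
      mub t * (rup - (g (t + 1) - g t)) = 0 ∧
      mul t * (rdn + (g (t + 1) - g t)) = 0)
    (hcs_cap : ∀ t ∈ Finset.Icc 1 T,
      rhol t * g t = 0 ∧ rhou t * (gbar - g t) = 0)
    -- stationarity: c_t − λ_t + Δμ_{t−1} − Δμ_t + ρ̄_t − ρ̲_t = 0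
    (hstat : ∀ t ∈ Finset.Icc 1 T,
      c t - lam t + ((mub (t - 1) - mul (t - 1)) - (mub t - mul t))
        + rhou t - rhol t = 0)
    -- the generator's TLMP: energy price plus ramping price
    (pi : ℕ → ℝ)
    (hpi : ∀ t ∈ Finset.Icc 1 T,
      pi t = lam t + ((mub t - mul t) - (mub (t - 1) - mul (t - 1)))) :
    ∀ x : ℕ → ℝ, (∀ t ∈ Finset.Icc 1 T, 0 ≤ x t ∧ x t ≤ gbar) →
      ∑ t ∈ Finset.Icc 1 T, (pi t - c t) * x t ≤
      ∑ t ∈ Finset.Icc 1 T, (pi t - c t) * g t := by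
  intro x hx
  apply Finset.sum_le_sum
  intro t ht
  have hst := hstat t ht
  have hp := hpi t ht
  have hkey : pi t - c t = rhou t - rhol t := by linarith
  obtain ⟨hrl, hru⟩ := hcs_cap t ht
  obtain ⟨hru_nn, hrl_nn⟩ := hrho_nn t ht
  obtain ⟨hx0, hx1⟩ := hx t ht
  obtain ⟨hg0, hg1, _, _⟩ := hfeas.2 t ht
  rw [hkey]
  nlinarith [mul_nonneg hrl_nn hx0, mul_nonneg hru_nn (sub_nonneg.2 hx1)]
end
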